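/- For the $HLS_3(\pi,\nu,\alpha)$ sequence and for all $n \geq 2$, $u \in \{2,\ldots,n\}$, $m \in \{0,\ldots,n\}$, $z_1 \in \{0,\ldots,n-1\}$, $k_1 \in \{\max\{0, z_1-(u-1)\},\ldots,\min\{z_1,n-u\}\}$ and nonnegative integer $k_2$, the quantity $\sigma(n,u,m,z_1,k_1,k_2) := \sum_{q_1=0}^{u}\sum_{q_2=0}^{u-q_1} (-1)^{q_1} \binom{u}{q_1\ q_2} \binom{k_1+q_1}{m-k_2-q_2}_* \frac{B(\pi+z_1+q_1, \nu+n+u-1-z_1-q_1)}{B(\pi+k_1+q_1, \nu+n-k_1-q_1)}$ equals $0$. -/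

import Mathlib

/-- The Euler Beta function `B(x,y) = Γ(x)Γ(y)/Γ(x+y)`. -/
noncomputable def Beta (x y : ℝ) : ℝ := Real.Gamma x * Real.Gamma y / Real.Gamma (x + y)

/-- Starred binomial coefficient: `a.choose b` if `0 ≤ b ≤ a`, else `0`. -/
def bstar (a : ℕ) (b : ℤ) : ℕ :=
  if 0 ≤ b ∧ b ≤ (a : ℤ) then a.choose b.toNat else 0

lemma bstar_eq (a : ℕ) (b : ℤ) : bstar a b = if 0 ≤ b then a.choose b.toNat else 0 := by
  unfold bstar
  by_cases h : 0 ≤ b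
  · by_cases h2 : b ≤ (a : ℤ)
    · simp [h, h2]
    · simp only [h, h2, and_false, if_false, if_true, true_and]
      exact (Nat.choose_eq_zero_of_lt (by omega)).symm
  · simp [h]

lemma bstar_vandermonde (A B : ℕ) (t : ℤ) :
    ∑ q ∈ Finset.range (B + 1), B.choose q * bstar A (t - q) = bstar (A + B) t := by
  rcases lt_or_ge t 0 with ht | ht
  · rw [bstar_eq, if_neg (by omega)]
    apply Finset.sum_eq_zero
    intro q _
    rw [bstar_eq, if_neg (by omega), mul_zero]
  · obtain ⟨s, rfl⟩ : ∃ s : ℕ, t = (s : ℤ) := ⟨t.toNat, by omega⟩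
    have hterm : ∀ q : ℕ, bstar A ((s : ℤ) - q) = if q ≤ s then A.choose (s - q) else 0 := by
      intro q
      rw [bstar_eq]
      by_cases h : q ≤ s
      · rw [if_pos (by omega), if_pos h]
        congr 1
        omega
      · rw [if_neg (by omega), if_neg h]
    have hrhs : bstar (A + B) (s : ℤ) = (A + B).choose s := by
      simp [bstar_eq]
    have hvdm : (A + B).choose s = ∑ q ∈ Finset.range (s + 1), B.choose q * A.choose (s - q) := by
      rw [show A + B = B + A by ring, Nat.add_choose_eq,
        Finset.Nat.sum_antidiagonal_eq_sum_range_succ_mk]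
    classical
    set f : ℕ → ℕ := fun q => B.choose q * (if q ≤ s then A.choose (s - q) else 0) with hf
    have hL : ∑ q ∈ Finset.range (B + 1), B.choose q * bstar A ((s : ℤ) - q)
        = ∑ q ∈ Finset.range (B + 1), f q := by
      apply Finset.sum_congr rfl
      intro q _
      rw [hterm q]
    have hR : ∑ q ∈ Finset.range (s + 1), B.choose q * A.choose (s - q)
        = ∑ q ∈ Finset.range (s + 1), f q := by
      apply Finset.sum_congr rfl
      intro q hq
      rw [Finset.mem_range] at hq
      simp [hf, Nat.lt_succ_iff.mp hq]
    have e1 : ∑ q ∈ Finset.range (B + 1), f q = ∑ q ∈ Finset.range (B + s + 1), f q :=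
      Finset.sum_subset (Finset.range_subset_range.mpr (by omega)) (fun q _ hq2 => by
        rw [Finset.mem_range, not_lt] at hq2
        simp [hf, Nat.choose_eq_zero_of_lt (show B < q by omega)])
    have e2 : ∑ q ∈ Finset.range (s + 1), f q = ∑ q ∈ Finset.range (B + s + 1), f q :=
      Finset.sum_subset (Finset.range_subset_range.mpr (by omega)) (fun q _ hq2 => by
        rw [Finset.mem_range, not_lt] at hq2
        simp [hf, if_neg (show ¬ q ≤ s by omega)])
    rw [hrhs, hvdm, hL, hR, e1, e2]

lemma Gamma_add_nat (x : ℝ) (hx : 0 < x) (a : ℕ) :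
    Real.Gamma (x + a) = (∏ j ∈ Finset.range a, (x + j)) * Real.Gamma x := by
  induction a with
  | zero => simp
  | succ a ih =>
    have h1 : x + ((a + 1 : ℕ) : ℝ) = (x + a) + 1 := by push_cast; ring
    have h2 : x + (a : ℝ) ≠ 0 := by positivity
    rw [h1, Real.Gamma_add_one h2, ih, Finset.prod_range_succ]
    ring

lemma beta_ratio (x y : ℝ) (hx : 0 < x) (hy : 0 < y) (a b : ℕ) :
    Beta (x + a) (y + b) / Beta x y =
      (∏ j ∈ Finset.range a, (x + j)) * (∏ j ∈ Finset.range b, (y + j)) /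
        (∏ j ∈ Finset.range (a + b), (x + y + j)) := by
  unfold Beta
  have e : x + (a : ℝ) + (y + (b : ℝ)) = x + y + ((a + b : ℕ) : ℝ) := by push_cast; ring
  rw [e, Gamma_add_nat x hx a, Gamma_add_nat y hy b,
    Gamma_add_nat (x + y) (by positivity) (a + b)]
  have g1 := Real.Gamma_pos_of_pos hx
  have g2 := Real.Gamma_pos_of_pos hy
  have g3 := Real.Gamma_pos_of_pos (show (0:ℝ) < x + y by positivity)
  have hp : (0:ℝ) < ∏ j ∈ Finset.range (a + b), (x + y + j) := by
    apply Finset.prod_pos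
    intro j _
    positivity
  field_simp

lemma finDiff (u : ℕ) : ∀ p : Polynomial ℝ, p.degree < (u : ℕ) →
    ∑ q ∈ Finset.range (u + 1), (-1 : ℝ) ^ q * (u.choose q : ℝ) * p.eval (q : ℝ) = 0 := by
  induction u with
  | zero =>
    intro p hp
    have hp0 : p = 0 := by
      rw [← Polynomial.degree_eq_bot, ← Nat.WithBot.lt_zero_iff]
      exact_mod_cast hp
    simp [hp0]
  | succ u ih =>
    intro p hp
    set p1 : Polynomial ℝ := p.comp (Polynomial.X + Polynomial.C 1) with hp1
    have hev : ∀ q : ℕ, p1.eval (q : ℝ) = p.eval ((q : ℝ) + 1) := by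
      intro q; simp [hp1, Polynomial.eval_comp]
    have hA : ∑ q ∈ Finset.range (u + 1 + 1), (-1:ℝ)^q * ((u+1).choose q : ℝ) * p.eval (q:ℝ)
        = (∑ q ∈ Finset.range (u + 1), (-1:ℝ)^q * (u.choose q : ℝ) * p.eval (q:ℝ))
          - (∑ q ∈ Finset.range (u + 1), (-1:ℝ)^q * (u.choose q : ℝ) * p.eval ((q:ℝ)+1)) := by
      rw [Finset.sum_range_succ' (fun q => (-1:ℝ)^q * ((u+1).choose q : ℝ) * p.eval (q:ℝ)) (u+1)]
      have e1 : ∀ q ∈ Finset.range (u+1),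
          (-1:ℝ)^(q+1) * ((u+1).choose (q+1) : ℝ) * p.eval (((q+1:ℕ)):ℝ)
          = ((-1:ℝ)^(q+1) * (u.choose q : ℝ) * p.eval ((q:ℝ)+1))
            + ((-1:ℝ)^(q+1) * (u.choose (q+1) : ℝ) * p.eval ((q:ℝ)+1)) := by
        intro q _
        rw [Nat.choose_succ_succ]
        push_cast
        ring
      rw [Finset.sum_congr rfl e1, Finset.sum_add_distrib]
      have e2 : ∑ q ∈ Finset.range (u+1), ((-1:ℝ)^(q+1) * (u.choose q : ℝ) * p.eval ((q:ℝ)+1))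
          = - ∑ q ∈ Finset.range (u+1), (-1:ℝ)^q * (u.choose q : ℝ) * p.eval ((q:ℝ)+1) := by
        rw [← Finset.sum_neg_distrib]
        exact Finset.sum_congr rfl fun q _ => by ring
      have e3 : (∑ q ∈ Finset.range (u+1), ((-1:ℝ)^(q+1) * (u.choose (q+1) : ℝ) * p.eval ((q:ℝ)+1)))
            + (-1:ℝ)^0 * ((u+1).choose 0 : ℝ) * p.eval (((0:ℕ)):ℝ)
          = ∑ q ∈ Finset.range (u + 1), (-1:ℝ)^q * (u.choose q : ℝ) * p.eval (q:ℝ) := by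
        rw [Finset.sum_range_succ' (fun q => (-1:ℝ)^q * (u.choose q : ℝ) * p.eval (q:ℝ)) u]
        rw [Finset.sum_range_succ
          (fun q => ((-1:ℝ)^(q+1) * (u.choose (q+1) : ℝ) * p.eval ((q:ℝ)+1))) u]
        rw [Nat.choose_eq_zero_of_lt (Nat.lt_succ_self u)]
        have e4 : ∀ q ∈ Finset.range u, ((-1:ℝ)^(q+1) * (u.choose (q+1) : ℝ) * p.eval ((q:ℝ)+1))
            = (-1:ℝ)^(q+1) * (u.choose (q+1) : ℝ) * p.eval (((q+1:ℕ)):ℝ) := by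
          intro q _
          push_cast
          ring
        rw [Finset.sum_congr rfl e4]
        simp
      rw [e2]
      linarith [e3]
    have hdeg : (p - p1).degree < (u : ℕ) := by
      by_cases hp0 : p = 0
      · rw [hp1, hp0]
        simp only [Polynomial.zero_comp, sub_zero, Polynomial.degree_zero]
        exact WithBot.bot_lt_coe u
      · have hnd : (Polynomial.X + Polynomial.C (1:ℝ)).natDegree = 1 :=
          Polynomial.natDegree_X_add_C 1
        have hlc : p1.leadingCoeff = p.leadingCoeff := by
          rw [hp1, Polynomial.leadingCoeff_comp (by rw [hnd]; norm_num)]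
          rw [(Polynomial.monic_X_add_C (1:ℝ)).leadingCoeff]
          simp
        have hp10 : p1 ≠ 0 := by
          intro h
          apply hp0
          rw [h] at hlc
          simp only [Polynomial.leadingCoeff_zero] at hlc
          exact Polynomial.leadingCoeff_eq_zero.mp hlc.symm
        have hdd : p.degree = p1.degree := by
          rw [Polynomial.degree_eq_natDegree hp0, Polynomial.degree_eq_natDegree hp10, hp1,
            Polynomial.natDegree_comp, hnd, mul_one]
        have h1 : (p - p1).degree < p.degree := Polynomial.degree_sub_lt hdd hp0 hlc.symm
        have h2 : p.degree ≤ (u : ℕ) := by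
          rw [Polynomial.degree_eq_natDegree hp0] at hp ⊢
          have : p.natDegree < u + 1 := by exact_mod_cast hp
          exact_mod_cast Nat.lt_succ_iff.mp this
        exact lt_of_lt_of_le h1 h2
    have hlin : ∑ q ∈ Finset.range (u+1), (-1:ℝ)^q * (u.choose q : ℝ) * (p - p1).eval (q:ℝ)
        = (∑ q ∈ Finset.range (u + 1), (-1:ℝ)^q * (u.choose q : ℝ) * p.eval (q:ℝ))
          - (∑ q ∈ Finset.range (u + 1), (-1:ℝ)^q * (u.choose q : ℝ) * p.eval ((q:ℝ)+1)) := by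
      rw [← Finset.sum_sub_distrib]
      refine Finset.sum_congr rfl fun q _ => ?_
      rw [Polynomial.eval_sub, hev]
      ring
    rw [hA, ← hlin]
    exact ih (p - p1) hdeg

/-- The key vanishing result for the `HLS₃(π,ν,α)` sequence: the quantity
`σ(n,u,m,z₁,k₁,k₂) = ∑_{q₁=0}^u ∑_{q₂=0}^{u-q₁} (-1)^{q₁} (u choose q₁ q₂)
C*(k₁+q₁, m-k₂-q₂) B(π+z₁+q₁, ν+n+u-1-z₁-q₁)/B(π+k₁+q₁, ν+n-k₁-q₁)` is zero
for all `n ≥ 2`, `2 ≤ u ≤ n`, `0 ≤ m ≤ n`, `0 ≤ z₁ ≤ n-1`,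
`max(0, z₁-(u-1)) ≤ k₁ ≤ min(z₁, n-u)` and `k₂ ∈ ℕ`. -/
theorem hls3_sigma_vanishes (π ν : ℝ) (hπ : 0 < π) (hν : 0 < ν)
    (n u m z1 k1 k2 : ℕ) (hn : 2 ≤ n) (hu : 2 ≤ u) (hun : u ≤ n) (hm : m ≤ n)
    (hz : z1 ≤ n - 1) (hk1a : z1 - (u - 1) ≤ k1) (hk1b : k1 ≤ min z1 (n - u)) :
    ∑ q1 ∈ Finset.range (u + 1), ∑ q2 ∈ Finset.range (u - q1 + 1),
      (-1 : ℝ) ^ q1 * ((u.choose q1 * (u - q1).choose q2 : ℕ) : ℝ) *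
        (bstar (k1 + q1) ((m : ℤ) - k2 - q2) : ℝ) *
        (Beta (π + z1 + q1) (ν + n + u - 1 - z1 - q1) /
          Beta (π + k1 + q1) (ν + n - k1 - q1)) = 0 := by
  have hk1z : k1 ≤ z1 := le_trans hk1b (min_le_left _ _)
  have hk1n : k1 ≤ n - u := le_trans hk1b (min_le_right _ _)
  set a := z1 - k1 with ha
  set b := u - 1 - a with hb
  have hz1 : z1 = k1 + a := by omega
  have hb2 : b + z1 + 1 = u + k1 := by omega
  set s0 : ℝ := π + ν + n with hs0
  set Pc : ℝ := ∏ j ∈ Finset.range (a + b), (s0 + j) with hPc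
  set bst : ℝ := (bstar (k1 + u) ((m : ℤ) - k2) : ℝ) with hbst
  set p : Polynomial ℝ :=
    (∏ j ∈ Finset.range a, (Polynomial.C (π + k1 + j) + Polynomial.X)) *
      (∏ j ∈ Finset.range b, (Polynomial.C (ν + n - k1 + j) - Polynomial.X)) with hpdef
  have hev : ∀ q : ℕ, p.eval (q : ℝ)
      = (∏ j ∈ Finset.range a, (π + k1 + q + j)) *
        (∏ j ∈ Finset.range b, (ν + n - k1 - q + j)) := by
    intro q
    rw [hpdef]
    simp only [Polynomial.eval_mul, Polynomial.eval_prod, Polynomial.eval_add,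
      Polynomial.eval_sub, Polynomial.eval_C, Polynomial.eval_X]
    congr 1 <;> exact Finset.prod_congr rfl fun j _ => by ring
  have hdeg : p.degree < (u : ℕ) := by
    have d1 : (∏ j ∈ Finset.range a,
        (Polynomial.C (π + (k1:ℝ) + j) + Polynomial.X)).degree ≤ (a : WithBot ℕ) := by
      refine le_trans (Polynomial.degree_prod_le _ _) (le_of_eq ?_)
      calc ∑ j ∈ Finset.range a, (Polynomial.C (π + (k1:ℝ) + j) + Polynomial.X).degree
          = ∑ _j ∈ Finset.range a, (1 : WithBot ℕ) := by
            refine Finset.sum_congr rfl fun j _ => ?_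
            rw [add_comm]
            exact Polynomial.degree_X_add_C _
        _ = (a : WithBot ℕ) := by simp
    have d2 : (∏ j ∈ Finset.range b,
        (Polynomial.C (ν + (n:ℝ) - k1 + j) - Polynomial.X)).degree ≤ (b : WithBot ℕ) := by
      refine le_trans (Polynomial.degree_prod_le _ _) (le_of_eq ?_)
      calc ∑ j ∈ Finset.range b, (Polynomial.C (ν + (n:ℝ) - k1 + j) - Polynomial.X).degree
          = ∑ _j ∈ Finset.range b, (1 : WithBot ℕ) := by
            refine Finset.sum_congr rfl fun j _ => ?_
            rw [show Polynomial.C (ν + (n:ℝ) - k1 + j) - Polynomial.X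
              = -(Polynomial.X - Polynomial.C (ν + (n:ℝ) - k1 + j)) by ring,
              Polynomial.degree_neg]
            exact Polynomial.degree_X_sub_C _
        _ = (b : WithBot ℕ) := by simp
    calc p.degree ≤ _ + _ := Polynomial.degree_mul_le _ _
      _ ≤ (a : WithBot ℕ) + (b : WithBot ℕ) := add_le_add d1 d2
      _ = ((a + b : ℕ) : WithBot ℕ) := by rw [Nat.cast_add]
      _ < ((u : ℕ) : WithBot ℕ) := by exact_mod_cast (show a + b < u by omega)
  have hratio : ∀ q1 : ℕ, q1 ≤ u →
      Beta (π + z1 + q1) (ν + n + u - 1 - z1 - q1) / Beta (π + k1 + q1) (ν + n - k1 - q1)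
        = p.eval (q1 : ℝ) / Pc := by
    intro q1 hq1
    have hkq : k1 + q1 ≤ n := by omega
    have hkqR : (k1:ℝ) + q1 ≤ n := by exact_mod_cast hkq
    have hx : (0:ℝ) < π + k1 + q1 := by positivity
    have hy : (0:ℝ) < ν + n - k1 - q1 := by linarith
    have harg1 : π + (z1:ℝ) + q1 = (π + k1 + q1) + a := by
      have h : (z1:ℝ) = k1 + a := by exact_mod_cast hz1
      rw [h]; ring
    have harg2 : ν + (n:ℝ) + u - 1 - z1 - q1 = (ν + n - k1 - q1) + b := by
      have h : (b:ℝ) + z1 + 1 = u + k1 := by exact_mod_cast hb2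
      linarith
    rw [harg1, harg2, beta_ratio _ _ hx hy a b, hev q1, hPc]
    congr 1
    exact Finset.prod_congr rfl fun j _ => by rw [hs0]; ring
  have hinner : ∀ q1 ∈ Finset.range (u + 1),
      (∑ q2 ∈ Finset.range (u - q1 + 1),
        (-1 : ℝ) ^ q1 * ((u.choose q1 * (u - q1).choose q2 : ℕ) : ℝ) *
          (bstar (k1 + q1) ((m : ℤ) - k2 - q2) : ℝ) *
          (Beta (π + z1 + q1) (ν + n + u - 1 - z1 - q1) /
            Beta (π + k1 + q1) (ν + n - k1 - q1)))
      = (bst / Pc) * ((-1 : ℝ) ^ q1 * (u.choose q1 : ℝ) * p.eval (q1 : ℝ)) := by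
    intro q1 hq1
    rw [Finset.mem_range] at hq1
    have hq1' : q1 ≤ u := by omega
    have hR := hratio q1 hq1'
    have hsum : ∑ q2 ∈ Finset.range (u - q1 + 1),
        ((u - q1).choose q2 * bstar (k1 + q1) ((m:ℤ) - k2 - q2)) = bstar (k1 + u) ((m:ℤ) - k2) := by
      have h := bstar_vandermonde (k1 + q1) (u - q1) ((m:ℤ) - k2)
      rw [show k1 + q1 + (u - q1) = k1 + u by omega] at h
      exact h
    calc (∑ q2 ∈ Finset.range (u - q1 + 1),
        (-1 : ℝ) ^ q1 * ((u.choose q1 * (u - q1).choose q2 : ℕ) : ℝ) *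
          (bstar (k1 + q1) ((m : ℤ) - k2 - q2) : ℝ) *
          (Beta (π + z1 + q1) (ν + n + u - 1 - z1 - q1) /
            Beta (π + k1 + q1) (ν + n - k1 - q1)))
        = ∑ q2 ∈ Finset.range (u - q1 + 1),
            ((-1:ℝ)^q1 * (u.choose q1 : ℝ) * (p.eval (q1:ℝ) / Pc)) *
              (((u - q1).choose q2 * bstar (k1 + q1) ((m:ℤ) - k2 - q2) : ℕ) : ℝ) := by
          refine Finset.sum_congr rfl fun q2 _ => ?_
          rw [hR]
          push_cast
          ring
      _ = ((-1:ℝ)^q1 * (u.choose q1 : ℝ) * (p.eval (q1:ℝ) / Pc)) *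
            ((∑ q2 ∈ Finset.range (u - q1 + 1),
              ((u - q1).choose q2 * bstar (k1 + q1) ((m:ℤ) - k2 - q2)) : ℕ) : ℝ) := by
          rw [← Finset.mul_sum, ← Nat.cast_sum]
      _ = (bst / Pc) * ((-1 : ℝ) ^ q1 * (u.choose q1 : ℝ) * p.eval (q1 : ℝ)) := by
          rw [hsum, hbst]
          ring
  rw [Finset.sum_congr rfl hinner, ← Finset.mul_sum, finDiff u p hdeg, mul_zero]
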